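/- If each utility function u_i is concave on a convex set P and θ* maximizes Σ_{i∈[n]} log(u_i(θ)) over θ ∈ P, then θ* is core-stable. -/

import Mathlib

lemma log_lower_bound {x : ℝ} (hx : -(1/2) ≤ x) :
    x - 2*x^2 ≤ Real.log (1+x) := by
  have h1 : (0:ℝ) < 1 + x := by linarith
  have h2 : Real.log (1+x)⁻¹ ≤ (1+x)⁻¹ - 1 :=
    Real.log_le_sub_one_of_pos (by positivity)
  rw [Real.log_inv] at h2
  have h3 : x/(1+x) ≤ Real.log (1+x) := by
    have h : (1:ℝ) - (1+x)⁻¹ = x/(1+x) := by field_simp; ring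
    linarith [h ▸ (by linarith : 1 - (1+x)⁻¹ ≤ Real.log (1+x))]
  have h4 : x - 2*x^2 ≤ x/(1+x) := by
    rw [le_div_iff₀ h1]; nlinarith
  linarith

theorem log_nash_maximizer_core_stable
    {d : ℕ} (P : Set (EuclideanSpace ℝ (Fin d))) (hP : Convex ℝ P)
    (n : ℕ) (u : Fin n → EuclideanSpace ℝ (Fin d) → ℝ)
    (hconc : ∀ i, ConcaveOn ℝ P (u i))
    (hpos : ∀ i, ∀ θ ∈ P, 0 < u i θ)
    (hdiff : ∀ i, Differentiable ℝ (u i))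
    (θstar : EuclideanSpace ℝ (Fin d)) (hθstar : θstar ∈ P)
    (hmax : ∀ θ ∈ P, ∑ i : Fin n, Real.log (u i θ) ≤ ∑ i : Fin n, Real.log (u i θstar)) :
    ¬ ∃ θ' ∈ P, ∃ S : Finset (Fin n), S.Nonempty ∧
        (∀ i ∈ S, (S.card : ℝ) / (n : ℝ) * u i θ' ≥ u i θstar) ∧
        (∃ i ∈ S, (S.card : ℝ) / (n : ℝ) * u i θ' > u i θstar) := by
  rintro ⟨θ', hθ', S, hSne, hge, i0, hi0S, hstrict⟩
  have hn : (0:ℝ) < n := by exact_mod_cast Fin.pos i0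
  have hcard : (0:ℝ) < S.card := by exact_mod_cast Finset.card_pos.mpr hSne
  have hu : ∀ i, 0 < u i θstar := fun i => hpos i θstar hθstar
  have hu' : ∀ i, 0 < u i θ' := fun i => hpos i θ' hθ'
  obtain ⟨y, hy⟩ : ∃ y : Fin n → ℝ, ∀ i, y i = u i θ' / u i θstar - 1 :=
    ⟨_, fun i => rfl⟩
  -- Step 1: ∑ y i > 0
  have hε : 0 < ∑ i, y i := by
    have hr : ∀ i ∈ S, (n : ℝ)/S.card ≤ u i θ' / u i θstar := by
      intro i hi
      have h := hge i hi
      rw [ge_iff_le] at h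
      rw [div_le_div_iff₀ hcard (hu i)]
      have hk : (S.card : ℝ) / n * u i θ' * n = S.card * u i θ' := by field_simp
      nlinarith [hu i, hu' i]
    have hr0 : (n : ℝ)/S.card < u i0 θ' / u i0 θstar := by
      rw [div_lt_div_iff₀ hcard (hu i0)]
      have hk : (S.card : ℝ) / n * u i0 θ' * n = S.card * u i0 θ' := by field_simp
      nlinarith [hu i0, hu' i0, hstrict]
    have hsumS : (n:ℝ) < ∑ i ∈ S, u i θ' / u i θstar := by
      have hlt := Finset.sum_lt_sum (f := fun i => (n:ℝ)/S.card)
        (g := fun i => u i θ' / u i θstar) hr ⟨i0, hi0S, hr0⟩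
      have hs : ∑ _i ∈ S, (n:ℝ)/S.card = n := by
        rw [Finset.sum_const, nsmul_eq_mul]
        field_simp
      linarith [hs ▸ hlt]
    have hsub : ∑ i ∈ S, u i θ' / u i θstar ≤ ∑ i, u i θ' / u i θstar := by
      apply Finset.sum_le_sum_of_subset_of_nonneg (Finset.subset_univ S)
      intro i _ _; exact le_of_lt (div_pos (hu' i) (hu i))
    have hsplit : ∑ i, y i = (∑ i, u i θ' / u i θstar) - n := by
      simp only [hy, Finset.sum_sub_distrib, Finset.sum_const, Finset.card_univ,
        Fintype.card_fin, nsmul_eq_mul, mul_one]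
    rw [hsplit]; linarith
  obtain ⟨ε, hεdef⟩ : ∃ ε : ℝ, ε = ∑ i, y i := ⟨_, rfl⟩
  rw [← hεdef] at hε
  obtain ⟨C, hC⟩ : ∃ C : ℝ, C = 1 + ∑ i, (y i)^2 := ⟨_, rfl⟩
  have hsq0 : 0 ≤ ∑ i, (y i)^2 := Finset.sum_nonneg fun i _ => sq_nonneg _
  have hC1 : 1 ≤ C := by rw [hC]; linarith
  have hC0 : 0 < C := by linarith
  have hyC : ∀ i, |y i| ≤ C := by
    intro i
    have h1 : (y i)^2 ≤ ∑ j, (y j)^2 :=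
      Finset.single_le_sum (fun j _ => sq_nonneg (y j)) (Finset.mem_univ i)
    rcases le_or_gt (|y i|) 1 with h | h
    · linarith
    · have h2 : |y i| ≤ (y i)^2 := by nlinarith [abs_nonneg (y i), sq_abs (y i)]
      linarith
  obtain ⟨t, ht0, ht1, htC, htε⟩ :
      ∃ t : ℝ, 0 < t ∧ t ≤ 1 ∧ t ≤ 1/(2*C) ∧ t ≤ ε/(4*C^2) :=
    ⟨min 1 (min (1/(2*C)) (ε/(4*C^2))),
      lt_min one_pos (lt_min (by positivity) (by positivity)),
      min_le_left _ _,
      le_trans (min_le_right _ _) (min_le_left _ _),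
      le_trans (min_le_right _ _) (min_le_right _ _)⟩
  have htC2 : t * C ≤ 1/2 := by
    have h1 : t * C ≤ 1/(2*C) * C := mul_le_mul_of_nonneg_right htC hC0.le
    have h2 : 1/(2*C) * C = 1/2 := by field_simp
    linarith
  have hty : ∀ i, -(1/2) ≤ t * y i := by
    intro i
    have h1 : t * |y i| ≤ t * C := mul_le_mul_of_nonneg_left (hyC i) ht0.le
    have h2 : t * -|y i| ≤ t * y i := mul_le_mul_of_nonneg_left (neg_abs_le (y i)) ht0.le
    have h3 : t * -|y i| = -(t * |y i|) := by ring
    linarith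
  -- Step 2: ∑ log(1 + t*y i) ≤ 0
  have hpos' : ∀ i, 0 < 1 + t * y i := by intro i; have := hty i; linarith
  have key : ∑ i, Real.log (1 + t * y i) ≤ 0 := by
    have hθtP : (1-t) • θstar + t • θ' ∈ P :=
      hP hθstar hθ' (by linarith) ht0.le (by ring)
    have hlog : ∀ i, Real.log (1 + t * y i) ≤
        Real.log (u i ((1-t) • θstar + t • θ')) - Real.log (u i θstar) := by
      intro i
      have h := (hconc i).2 hθstar hθ' (by linarith : (0:ℝ) ≤ 1 - t) ht0.le (by ring)
      have h0 : u i θstar ≠ 0 := (hu i).ne'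
      have he : u i θstar * (1 + t * y i) = (1-t) * u i θstar + t * u i θ' := by
        rw [hy]; field_simp; ring
      have hlow : u i θstar * (1 + t * y i) ≤ u i ((1-t) • θstar + t • θ') := by
        rw [he]; simpa using h
      have h1 : 0 < u i θstar * (1 + t * y i) := mul_pos (hu i) (hpos' i)
      have h2 := Real.log_le_log h1 hlow
      rw [Real.log_mul (ne_of_gt (hu i)) (ne_of_gt (hpos' i))] at h2
      linarith
    calc ∑ i, Real.log (1 + t * y i)
        ≤ ∑ i, (Real.log (u i ((1-t) • θstar + t • θ')) - Real.log (u i θstar)) :=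
          Finset.sum_le_sum fun i _ => hlog i
      _ = ∑ i, Real.log (u i ((1-t) • θstar + t • θ'))
            - ∑ i, Real.log (u i θstar) := by rw [Finset.sum_sub_distrib]
      _ ≤ 0 := by linarith [hmax _ hθtP]
  -- Step 3: ∑ log(1 + t*y i) > 0, contradiction
  have hsum : ∑ i, (t * y i - 2*(t * y i)^2) ≤ ∑ i, Real.log (1 + t * y i) :=
    Finset.sum_le_sum fun i _ => log_lower_bound (hty i)
  have heq : ∑ i, (t * y i - 2*(t * y i)^2)
      = t * ε - 2 * t^2 * ∑ i, (y i)^2 := by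
    rw [hεdef, Finset.sum_sub_distrib, Finset.mul_sum, Finset.mul_sum]
    congr 1
    apply Finset.sum_congr rfl
    intro i _; ring
  have hsq : ∑ i, (y i)^2 ≤ C := by rw [hC]; linarith
  have h1 : 2 * t^2 * ∑ i, (y i)^2 ≤ 2 * t^2 * C :=
    mul_le_mul_of_nonneg_left hsq (by positivity)
  have h2 : 2 * t^2 * C ≤ t * ε / 2 := by
    have hA : t * (4*C^2) ≤ ε := by
      rw [le_div_iff₀ (by positivity : (0:ℝ) < 4*C^2)] at htε
      linarith
    have hB : t * (t * (4*C^2)) ≤ t * ε := mul_le_mul_of_nonneg_left hA ht0.le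
    have hD : 4*t^2*C ≤ 4*t^2*C^2 := by
      have hE := mul_nonneg (mul_nonneg (sq_nonneg t) hC0.le)
        (by linarith : (0:ℝ) ≤ C - 1)
      nlinarith [hE]
    nlinarith [hB, hD]
  have h3 : 0 < t * ε / 2 := by positivity
  rw [heq] at hsum
  linarith
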